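/- Let q ∈ 𝕀 be primitive and admissible. Then there exists α_q ∈ 𝔬 such that α_q²·nr(q)·𝔬 = nr(q)𝔬 ∩ nr(q)'𝔬 as ideals of 𝔬; in other words, the fractional 𝔬-ideal (nr(q)𝔬 ∩ nr(q)'𝔬)·(nr(q)𝔬)⁻¹ is the square of a principal integral ideal of 𝔬. -/

import Mathlib

noncomputable section

open Quaternion Classical

/-- √5 as a real number. -/
def sqrt5 : ℝ := Real.sqrt 5

/-- The golden ratio τ = (1+√5)/2. -/
def gold : ℝ := (1 + sqrt5) / 2

/-- membership in K = ℚ(√5) ⊆ ℝ. -/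
def inK (x : ℝ) : Prop := ∃ a b : ℚ, x = (a : ℝ) + (b : ℝ) * sqrt5

/-- The nontrivial field automorphism of K = ℚ(√5) (√5 ↦ -√5), extended by the
identity outside K.  Since `1, √5` are linearly independent over ℚ, the rational
coordinates of an element of K are unique, so this is well defined. -/
noncomputable def conjK (x : ℝ) : ℝ :=
  if h : ∃ a b : ℚ, x = (a : ℝ) + (b : ℝ) * sqrt5 then
    (h.choose : ℝ) - (h.choose_spec.choose : ℝ) * sqrt5
  else x

/-- membership in 𝔬 = ℤ[τ], the ring of integers of ℚ(√5). -/
def inO (x : ℝ) : Prop := ∃ m n : ℤ, x = (m : ℝ) + (n : ℝ) * gold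

/-- The twist map (a,b,c,d) ↦ (a',b',d',c') on quaternions. -/
noncomputable def twist (q : ℍ[ℝ]) : ℍ[ℝ] :=
  ⟨conjK q.re, conjK q.imI, conjK q.imK, conjK q.imJ⟩

/-- reduced norm nr(q) = q q̄ (as a real number). -/
def nr (q : ℍ[ℝ]) : ℝ := (q * star q).re

/-- reduced trace tr(q) = q + q̄ (as a real number). -/
def trq (q : ℍ[ℝ]) : ℝ := (q + star q).re

/-- generators of the icosian ring. -/
def e₁ : ℍ[ℝ] := ⟨1, 0, 0, 0⟩
def e₂ : ℍ[ℝ] := ⟨0, 1, 0, 0⟩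
def e₃ : ℍ[ℝ] := ⟨1/2, 1/2, 1/2, 1/2⟩
def e₄ : ℍ[ℝ] := ⟨(1 - gold)/2, gold/2, 0, 1/2⟩

/-- membership in the icosian ring 𝕀, the 𝔬-span of the four generators. -/
def inI (q : ℍ[ℝ]) : Prop :=
  ∃ c₁ c₂ c₃ c₄ : ℝ, inO c₁ ∧ inO c₂ ∧ inO c₃ ∧ inO c₄ ∧
    q = c₁ • e₁ + c₂ • e₂ + c₃ • e₃ + c₄ • e₄

/-- generators of the copy L of the root lattice A₄. -/
def g₁ : ℍ[ℝ] := ⟨1, 0, 0, 0⟩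
def g₂ : ℍ[ℝ] := ⟨-1/2, 1/2, 1/2, 1/2⟩
def g₃ : ℍ[ℝ] := ⟨0, -1, 0, 0⟩
def g₄ : ℍ[ℝ] := ⟨0, 1/2, (gold - 1)/2, -gold/2⟩

/-- L, the ℤ-span of the four generators, as an additive subgroup of ℍ(ℝ). -/
def Lgrp : AddSubgroup ℍ[ℝ] := AddSubgroup.closure {g₁, g₂, g₃, g₄}

/-- `q` is a primitive icosian. -/
def PrimitiveIcosian (q : ℍ[ℝ]) : Prop :=
  inI q ∧ ∀ α : ℝ, inK α → inI (α • q) → inO α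

/-- `q` is admissible with |q q̃| = n. -/
def Admissible (q : ℍ[ℝ]) (n : ℕ) : Prop :=
  nr q * conjK (nr q) = (n : ℝ) ^ 2

/-- The additive map x ↦ r • (q x q̃) on ℍ(ℝ). -/
noncomputable def rotHom (q : ℍ[ℝ]) (r : ℝ) : ℍ[ℝ] →+ ℍ[ℝ] where
  toFun x := r • (q * x * twist q)
  map_zero' := by simp
  map_add' x y := by
    simp [mul_add, add_mul, smul_add]

/-- Commensurateness of two additive subgroups of ℍ(ℝ). -/
def Commensurate (A B : AddSubgroup ℍ[ℝ]) : Prop :=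
  (A ⊓ B).relIndex A ≠ 0 ∧ (A ⊓ B).relIndex B ≠ 0

/-- Image of an additive subgroup under a linear isometry of ℍ(ℝ) ≅ ℝ⁴. -/
def mapIso (R : ℍ[ℝ] ≃ₗᵢ[ℝ] ℍ[ℝ]) (A : AddSubgroup ℍ[ℝ]) : AddSubgroup ℍ[ℝ] :=
  A.map (R.toLinearEquiv.toLinearMap.toAddMonoidHom)

/-- `R` lies in SO(4,ℝ). -/
def IsRotation (R : ℍ[ℝ] ≃ₗᵢ[ℝ] ℍ[ℝ]) : Prop :=
  LinearMap.det (R.toLinearEquiv.toLinearMap) = 1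


lemma gold_sq' : gold ^ 2 = gold + 1 := Real.goldenRatio_sq
lemma gold_irr : Irrational gold := Real.goldenRatio_irrational

/-- golden integers : a + b τ -/
@[ext] structure GInt where
  a : ℤ
  b : ℤ
deriving DecidableEq

namespace GInt

instance : Zero GInt := ⟨⟨0, 0⟩⟩
instance : One GInt := ⟨⟨1, 0⟩⟩
instance : Add GInt := ⟨fun x y => ⟨x.a + y.a, x.b + y.b⟩⟩
instance : Neg GInt := ⟨fun x => ⟨-x.a, -x.b⟩⟩
instance : Mul GInt := ⟨fun x y => ⟨x.a * y.a + x.b * y.b, x.a * y.b + x.b * y.a + x.b * y.b⟩⟩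

@[simp] lemma zero_a : (0 : GInt).a = 0 := rfl
@[simp] lemma zero_b : (0 : GInt).b = 0 := rfl
@[simp] lemma one_a : (1 : GInt).a = 1 := rfl
@[simp] lemma one_b : (1 : GInt).b = 0 := rfl
@[simp] lemma add_a (x y : GInt) : (x + y).a = x.a + y.a := rfl
@[simp] lemma add_b (x y : GInt) : (x + y).b = x.b + y.b := rfl
@[simp] lemma neg_a (x : GInt) : (-x).a = -x.a := rfl
@[simp] lemma neg_b (x : GInt) : (-x).b = -x.b := rfl
@[simp] lemma mul_a (x y : GInt) : (x * y).a = x.a * y.a + x.b * y.b := rfl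
@[simp] lemma mul_b (x y : GInt) : (x * y).b = x.a * y.b + x.b * y.a + x.b * y.b := rfl

instance : CommRing GInt where
  add_assoc x y z := by ext <;> simp <;> ring
  zero_add x := by ext <;> simp
  add_zero x := by ext <;> simp
  add_comm x y := by ext <;> simp <;> ring
  mul_assoc x y z := by ext <;> simp <;> ring
  one_mul x := by ext <;> simp
  mul_one x := by ext <;> simp
  left_distrib x y z := by ext <;> simp <;> ring
  right_distrib x y z := by ext <;> simp <;> ring
  mul_comm x y := by ext <;> simp <;> ring
  zero_mul x := by ext <;> simp
  mul_zero x := by ext <;> simp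
  neg_add_cancel x := by ext <;> simp
  nsmul := nsmulRec
  zsmul := zsmulRec

/-- the embedding into ℝ. -/
def toR : GInt →+* ℝ where
  toFun x := (x.a : ℝ) + (x.b : ℝ) * gold
  map_one' := by simp
  map_zero' := by simp
  map_add' x y := by simp; push_cast; ring
  map_mul' x y := by
    simp only [mul_a, mul_b]
    push_cast
    linear_combination (-(x.b * y.b) : ℝ) * gold_sq'

lemma toR_def (x : GInt) : toR x = (x.a : ℝ) + (x.b : ℝ) * gold := rfl

lemma int_gold_eq_zero {m n : ℤ} (h : (m : ℝ) + (n : ℝ) * gold = 0) : m = 0 ∧ n = 0 := by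
  rcases eq_or_ne n 0 with hn | hn
  · subst hn; simp at h; exact ⟨by exact_mod_cast h, rfl⟩
  · exfalso
    have hnR : (n : ℝ) ≠ 0 := Int.cast_ne_zero.mpr hn
    refine gold_irr ⟨(-m) / n, ?_⟩
    push_cast
    rw [div_eq_iff hnR]
    linarith

lemma toR_injective : Function.Injective toR := by
  intro x y h
  have h2 : ((x.a - y.a : ℤ) : ℝ) + ((x.b - y.b : ℤ) : ℝ) * gold = 0 := by
    push_cast
    simp only [toR_def] at h
    linarith [h]
  obtain ⟨h3, h4⟩ := int_gold_eq_zero h2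
  ext <;> omega

instance : IsDomain GInt := Function.Injective.isDomain toR toR_injective

end GInt

section Part2

namespace GInt

@[simp] lemma mk_zero : (GInt.mk 0 0) = 0 := rfl

@[simp] lemma sub_a (x y : GInt) : (x - y).a = x.a - y.a := by
  rw [sub_eq_add_neg, add_a, neg_a]; ring

@[simp] lemma sub_b (x y : GInt) : (x - y).b = x.b - y.b := by
  rw [sub_eq_add_neg, add_b, neg_b]; ring

/-- conjugation a + bτ ↦ (a+b) - bτ. -/
def conjG (x : GInt) : GInt := ⟨x.a + x.b, -x.b⟩

lemma conjG_zero : conjG 0 = 0 := by simp [conjG]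

@[simp] lemma conjG_eq_zero {x : GInt} : conjG x = 0 ↔ x = 0 := by
  constructor
  · intro h
    have h1 := congrArg GInt.a h
    have h2 := congrArg GInt.b h
    simp only [conjG, zero_a, zero_b] at h1 h2
    ext <;> simp <;> omega
  · rintro rfl; exact conjG_zero

/-- the integer norm. -/
def NZ (x : GInt) : ℤ := x.a ^ 2 + x.a * x.b - x.b ^ 2

lemma NZ_mul (x y : GInt) : NZ (x * y) = NZ x * NZ y := by
  simp only [NZ, mul_a, mul_b]; ring

lemma toR_conjG_mul (x : GInt) : toR x * toR (conjG x) = (NZ x : ℝ) := by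
  simp only [toR_def, conjG, NZ]
  push_cast
  linear_combination (-((x.b : ℝ)^2)) * gold_sq'

lemma NZ_eq_zero {x : GInt} : NZ x = 0 ↔ x = 0 := by
  constructor
  · intro h
    have h2 : toR x * toR (conjG x) = 0 := by rw [toR_conjG_mul, h]; simp
    rcases mul_eq_zero.mp h2 with h3 | h3
    · exact toR_injective (by simpa using h3)
    · have : conjG x = 0 := toR_injective (by simpa using h3)
      exact conjG_eq_zero.mp this
  · rintro rfl; rfl

/-- Euclidean quotient by rounding rational coordinates. -/
def equo (x y : GInt) : GInt :=
  ⟨round (((x.a : ℚ) * y.a + x.a * y.b - x.b * y.b) / (NZ y : ℚ)),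
   round (((x.b : ℚ) * y.a - x.a * y.b) / (NZ y : ℚ))⟩

lemma equo_zero (x : GInt) : equo x 0 = 0 := by
  simp [equo, NZ]

lemma qident (xa xb ya yb q1 q2 N : ℚ) (hN : N ≠ 0) (hNe : N = ya^2 + ya*yb - yb^2) :
    (xa - (ya*q1 + yb*q2))^2 + (xa - (ya*q1 + yb*q2))*(xb - (ya*q2 + yb*q1 + yb*q2))
      - (xb - (ya*q2 + yb*q1 + yb*q2))^2
    = N * (((xa*ya + xa*yb - xb*yb)/N - q1)^2
          + ((xa*ya + xa*yb - xb*yb)/N - q1) * ((xb*ya - xa*yb)/N - q2)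
          - ((xb*ya - xa*yb)/N - q2)^2) := by
  field_simp
  subst hNe
  ring

lemma remainder_key {x y : GInt} (hy : y ≠ 0) :
    (NZ (x - y * equo x y)).natAbs < (NZ y).natAbs := by
  have hN : NZ y ≠ 0 := fun h => hy (NZ_eq_zero.mp h)
  have hNQ : ((NZ y : ℤ) : ℚ) ≠ 0 := Int.cast_ne_zero.mpr hN
  have hNe : ((NZ y : ℤ) : ℚ) = (y.a : ℚ)^2 + (y.a : ℚ) * (y.b : ℚ) - (y.b : ℚ)^2 := by
    push_cast [NZ]; ring
  have hu : |((x.a : ℚ) * y.a + x.a * y.b - x.b * y.b) / (NZ y : ℚ) - ((equo x y).a : ℚ)|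
      ≤ 1 / 2 := abs_sub_round _
  have hv : |((x.b : ℚ) * y.a - x.a * y.b) / (NZ y : ℚ) - ((equo x y).b : ℚ)|
      ≤ 1 / 2 := abs_sub_round _
  have hid : ((NZ (x - y * equo x y) : ℤ) : ℚ)
      = (NZ y : ℚ) *
        ((((x.a : ℚ) * y.a + x.a * y.b - x.b * y.b) / (NZ y : ℚ) - ((equo x y).a : ℚ))^2
          + (((x.a : ℚ) * y.a + x.a * y.b - x.b * y.b) / (NZ y : ℚ) - ((equo x y).a : ℚ))
            * (((x.b : ℚ) * y.a - x.a * y.b) / (NZ y : ℚ) - ((equo x y).b : ℚ))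
          - (((x.b : ℚ) * y.a - x.a * y.b) / (NZ y : ℚ) - ((equo x y).b : ℚ))^2) := by
    have h0 := qident (x.a : ℚ) x.b y.a y.b ((equo x y).a : ℚ) ((equo x y).b : ℚ)
      ((NZ y : ℤ) : ℚ) hNQ hNe
    rw [hNe] at h0
    rw [hNe]
    push_cast [NZ, sub_a, sub_b, mul_a, mul_b]
    push_cast at h0
    linear_combination h0
  set u : ℚ := ((x.a : ℚ) * y.a + x.a * y.b - x.b * y.b) / (NZ y : ℚ) - ((equo x y).a : ℚ)
    with hudef
  set v : ℚ := ((x.b : ℚ) * y.a - x.a * y.b) / (NZ y : ℚ) - ((equo x y).b : ℚ) with hvdef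
  have hbound : |u ^ 2 + u * v - v ^ 2| ≤ 3 / 4 := by
    rw [abs_le] at hu hv ⊢
    constructor <;> nlinarith [hu.1, hu.2, hv.1, hv.2]
  have hlt : |((NZ (x - y * equo x y) : ℤ) : ℚ)| < |((NZ y : ℤ) : ℚ)| := by
    rw [hid, abs_mul]
    have h1 : (0 : ℚ) < |((NZ y : ℤ) : ℚ)| := abs_pos.mpr hNQ
    calc _ ≤ |((NZ y : ℤ) : ℚ)| * (3 / 4) := mul_le_mul_of_nonneg_left hbound (le_of_lt h1)
      _ < _ := by nlinarith
  have habs : |NZ (x - y * equo x y)| < |NZ y| := by exact_mod_cast hlt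
  rw [Int.abs_eq_natAbs, Int.abs_eq_natAbs] at habs
  exact_mod_cast habs

instance : EuclideanDomain GInt where
  quotient := equo
  quotient_zero := equo_zero
  remainder x y := x - y * equo x y
  quotient_mul_add_remainder_eq x y := by ring
  r x y := (NZ x).natAbs < (NZ y).natAbs
  r_wellFounded := (measure fun x => (NZ x).natAbs).wf
  remainder_lt x y hy := remainder_key hy
  mul_left_not_lt a b hb := by
    show ¬ (NZ (a * b)).natAbs < (NZ a).natAbs
    rw [NZ_mul, Int.natAbs_mul]
    have h1 : 1 ≤ (NZ b).natAbs := by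
      have : NZ b ≠ 0 := fun h => hb (NZ_eq_zero.mp h)
      omega
    exact Nat.not_lt.mpr (Nat.le_mul_of_pos_right _ (by omega))

end GInt

end Part2

section Part3

namespace GInt

noncomputable instance : GCDMonoid GInt := UniqueFactorizationMonoid.toGCDMonoid _

lemma key (N N' n : GInt) (hN : N ≠ 0) (h : N * N' = n ^ 2) :
    ∃ d : GInt, Associated (d ^ 2 * N) (lcm N N') := by
  set g := gcd N N' with hgdef
  have hg : g ≠ 0 := fun h0 => hN ((gcd_eq_zero_iff _ _).mp h0).1
  obtain ⟨A, hA⟩ : g ∣ N := gcd_dvd_left N N'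
  obtain ⟨B, hB⟩ : g ∣ N' := gcd_dvd_right N N'
  have hu : IsUnit (gcd A B) := by
    have h2 := (gcd_mul_left' g A B).symm
    rw [← hA, ← hB, ← hgdef] at h2
    exact isUnit_of_associated_mul h2 hg
  have hg2 : g ^ 2 ∣ n ^ 2 := by
    refine ⟨A * B, ?_⟩
    rw [← h, hA, hB]; ring
  have hgn : g ∣ n := (IsIntegrallyClosed.pow_dvd_pow_iff two_ne_zero).mp hg2
  obtain ⟨c, hc⟩ := hgn
  have hAB : B * A = c ^ 2 := by
    have h2 : g ^ 2 * (B * A) = g ^ 2 * c ^ 2 := by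
      rw [← mul_pow, ← hc, ← h, hA, hB]; ring
    exact mul_left_cancel₀ (pow_ne_zero 2 hg) h2
  have huBA : IsUnit (gcd B A) := (gcd_comm' A B).isUnit hu
  obtain ⟨d, hd⟩ := exists_associated_pow_of_mul_eq_pow huBA hAB
  refine ⟨d, ?_⟩
  have h3 : Associated (g * lcm N N') (g * (N * B)) := by
    have h4 := gcd_mul_lcm N N'
    rw [← hgdef] at h4
    have h5 : N * N' = g * (N * B) := by rw [hB]; ring
    rwa [h5] at h4
  have h4 : Associated (lcm N N') (N * B) :=
    Associated.of_mul_left h3 (Associated.refl _) hg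
  have h6 : Associated (d ^ 2 * N) (B * N) := hd.mul_right N
  rw [mul_comm B N] at h6
  exact h6.trans h4.symm

end GInt

end Part3


section Part4

lemma sqrt5_irr : Irrational sqrt5 := by
  have h5 : Nat.Prime 5 := by norm_num
  simpa [sqrt5] using h5.irrational_sqrt

lemma rat_coords_unique {a b a' b' : ℚ} (h : (a : ℝ) + (b : ℝ) * sqrt5 = (a' : ℝ) + (b' : ℝ) * sqrt5) :
    a = a' ∧ b = b' := by
  rcases eq_or_ne b b' with hb | hb
  · subst hb
    have : (a : ℝ) = (a' : ℝ) := by linarith [h]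
    exact ⟨by exact_mod_cast this, rfl⟩
  · exfalso
    have hbR : ((b - b' : ℚ) : ℝ) ≠ 0 := by
      push_cast
      intro h0
      apply hb
      have : (b : ℝ) = (b' : ℝ) := by linarith
      exact_mod_cast this
    refine sqrt5_irr ⟨(a' - a) / (b - b'), ?_⟩
    push_cast
    rw [div_eq_iff (by push_cast at hbR; exact hbR)]
    push_cast at h ⊢
    linarith

lemma conjK_eq (a b : ℚ) : conjK ((a : ℝ) + (b : ℝ) * sqrt5) = (a : ℝ) - (b : ℝ) * sqrt5 := by
  have hx : ∃ a' b' : ℚ, ((a : ℝ) + (b : ℝ) * sqrt5) = (a' : ℝ) + (b' : ℝ) * sqrt5 := ⟨a, b, rfl⟩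
  rw [conjK, dif_pos hx]
  obtain ⟨h1, h2⟩ := rat_coords_unique hx.choose_spec.choose_spec.symm
  exact congrArg₂ (fun p q : ℚ => (p : ℝ) - (q : ℝ) * sqrt5) h1 h2

lemma conjK_toR (z : GInt) : conjK (GInt.toR z) = GInt.toR z.conjG := by
  have h1 : GInt.toR z = ((z.a + z.b / 2 : ℚ) : ℝ) + ((z.b / 2 : ℚ) : ℝ) * sqrt5 := by
    rw [GInt.toR_def, gold]
    push_cast
    ring
  rw [h1, conjK_eq]
  rw [GInt.toR_def]
  show _ = ((z.conjG.a : ℝ)) + ((z.conjG.b : ℝ)) * gold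
  simp only [GInt.conjG]
  rw [gold]
  push_cast
  ring

lemma inO_toR (z : GInt) : inO (GInt.toR z) := ⟨z.a, z.b, GInt.toR_def z⟩

end Part4


theorem exists_extension_factor (q : ℍ[ℝ]) (hprim : PrimitiveIcosian q)
    (hadm : ∃ n : ℕ, Admissible q n) :
    ∃ α : ℝ, inO α ∧
      {x : ℝ | ∃ c : ℝ, inO c ∧ x = α ^ 2 * nr q * c} =
        {x : ℝ | ∃ c : ℝ, inO c ∧ x = nr q * c} ∩
          {x : ℝ | ∃ c : ℝ, inO c ∧ x = conjK (nr q) * c} := by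
  obtain ⟨c₁, c₂, c₃, c₄, hc₁, hc₂, hc₃, hc₄, hq⟩ := hprim.1
  obtain ⟨m₁, n₁, rfl⟩ := hc₁
  obtain ⟨m₂, n₂, rfl⟩ := hc₂
  obtain ⟨m₃, n₃, rfl⟩ := hc₃
  obtain ⟨m₄, n₄, rfl⟩ := hc₄
  set z₁ : GInt := ⟨m₁, n₁⟩
  set z₂ : GInt := ⟨m₂, n₂⟩
  set z₃ : GInt := ⟨m₃, n₃⟩
  set z₄ : GInt := ⟨m₄, n₄⟩
  set tau : GInt := ⟨0, 1⟩ with htaudef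
  set Nq : GInt := z₁*z₁ + z₂*z₂ + z₃*z₃ + z₄*z₄ + z₁*z₃ + (1 - tau)*z₁*z₄
      + z₂*z₃ + tau*z₂*z₄ + z₃*z₄ with hNqdef
  have htau : GInt.toR tau = gold := by rw [GInt.toR_def, htaudef]; simp
  have hz₁ : ((m₁ : ℝ) + (n₁ : ℝ) * gold) = GInt.toR z₁ := rfl
  have hz₂ : ((m₂ : ℝ) + (n₂ : ℝ) * gold) = GInt.toR z₂ := rfl
  have hz₃ : ((m₃ : ℝ) + (n₃ : ℝ) * gold) = GInt.toR z₃ := rfl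
  have hz₄ : ((m₄ : ℝ) + (n₄ : ℝ) * gold) = GInt.toR z₄ := rfl
  have hNqR : GInt.toR Nq = (GInt.toR z₁)^2 + (GInt.toR z₂)^2 + (GInt.toR z₃)^2
      + (GInt.toR z₄)^2 + GInt.toR z₁ * GInt.toR z₃
      + (1 - gold) * (GInt.toR z₁ * GInt.toR z₄) + GInt.toR z₂ * GInt.toR z₃
      + gold * (GInt.toR z₂ * GInt.toR z₄) + GInt.toR z₃ * GInt.toR z₄ := by
    rw [hNqdef]
    simp only [map_add, map_mul, map_sub, map_one, htau]
    ring
  have hnr : nr q = GInt.toR Nq := by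
    have h5 : nr q = q.re^2 + q.imI^2 + q.imJ^2 + q.imK^2 := by
      rw [show nr q = Quaternion.normSq q from rfl, Quaternion.normSq_def']
    rw [h5, hq, hNqR]
    simp only [hz₁, hz₂, hz₃, hz₄]
    simp only [Quaternion.re_add, Quaternion.imI_add, Quaternion.imJ_add, Quaternion.imK_add, Quaternion.re_smul, Quaternion.imI_smul, Quaternion.imJ_smul, Quaternion.imK_smul]
    simp [e₁, e₂, e₃, e₄]
    linear_combination ((GInt.toR z₄)^2 / 2) * gold_sq'
  have hconj : conjK (nr q) = GInt.toR Nq.conjG := by rw [hnr, conjK_toR]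
  obtain ⟨nn, hn⟩ := hadm
  have hn' : nr q * conjK (nr q) = (nn : ℝ)^2 := hn
  have hNN : Nq * Nq.conjG = (nn : GInt)^2 := by
    apply GInt.toR_injective
    rw [map_mul, map_pow, map_natCast, ← hnr, ← hconj]
    exact hn'
  by_cases hNq0 : Nq = 0
  · refine ⟨0, ⟨0, 0, by simp⟩, ?_⟩
    have h0 : nr q = 0 := by rw [hnr, hNq0, map_zero]
    have h0' : conjK (nr q) = 0 := by rw [hconj, hNq0, GInt.conjG_zero, map_zero]
    ext x
    simp only [Set.mem_setOf_eq, Set.mem_inter_iff, h0, h0']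
    constructor
    · rintro ⟨c, hc, rfl⟩
      exact ⟨⟨0, ⟨0, 0, by simp⟩, by ring⟩, ⟨0, ⟨0, 0, by simp⟩, by ring⟩⟩
    · rintro ⟨⟨c, hc, rfl⟩, -⟩
      exact ⟨0, ⟨0, 0, by simp⟩, by ring⟩
  · obtain ⟨d, hassoc⟩ := GInt.key Nq Nq.conjG nn hNq0 hNN
    refine ⟨GInt.toR d, inO_toR d, ?_⟩
    ext x
    simp only [Set.mem_setOf_eq, Set.mem_inter_iff]
    constructor
    · rintro ⟨c, ⟨m, n, rfl⟩, rfl⟩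
      set z : GInt := ⟨m, n⟩ with hzdef
      have hz : ((m : ℝ) + (n : ℝ) * gold) = GInt.toR z := rfl
      constructor
      · refine ⟨GInt.toR (d^2*z), inO_toR _, ?_⟩
        rw [hnr, hz, map_mul, map_pow]
        ring
      · have hdvd : Nq.conjG ∣ d^2*Nq*z :=
          dvd_mul_of_dvd_left ((dvd_lcm_right Nq Nq.conjG).trans hassoc.symm.dvd) z
        obtain ⟨w, hw⟩ := hdvd
        refine ⟨GInt.toR w, inO_toR _, ?_⟩
        rw [hconj, hnr, hz, ← map_mul]
        calc GInt.toR d ^ 2 * GInt.toR Nq * GInt.toR z = GInt.toR (d^2*Nq*z) := by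
              rw [map_mul, map_mul, map_pow]
          _ = GInt.toR (Nq.conjG * w) := by rw [hw]
    · rintro ⟨⟨cc1, ⟨mm1, nn1, rfl⟩, hx1⟩, ⟨cc2, ⟨mm2, nn2, rfl⟩, hx2⟩⟩
      set w1 : GInt := ⟨mm1, nn1⟩ with hw1def
      set w2 : GInt := ⟨mm2, nn2⟩ with hw2def
      have hzw1 : ((mm1 : ℝ) + (nn1 : ℝ) * gold) = GInt.toR w1 := rfl
      have hzw2 : ((mm2 : ℝ) + (nn2 : ℝ) * gold) = GInt.toR w2 := rfl
      have he : Nq * w1 = Nq.conjG * w2 := by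
        apply GInt.toR_injective
        rw [map_mul, map_mul, ← hnr, ← hconj, ← hzw1, ← hzw2]
        exact hx1.symm.trans hx2
      have hdvd : d^2*Nq ∣ Nq*w1 :=
        hassoc.dvd.trans (lcm_dvd ⟨w1, rfl⟩ ⟨w2, he⟩)
      obtain ⟨w, hw⟩ := hdvd
      refine ⟨GInt.toR w, inO_toR _, ?_⟩
      rw [hx1, hnr, hzw1]
      calc GInt.toR Nq * GInt.toR w1 = GInt.toR (Nq * w1) := (map_mul _ _ _).symm
        _ = GInt.toR (d^2*Nq*w) := by rw [hw]
        _ = GInt.toR d ^ 2 * GInt.toR Nq * GInt.toR w := by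
              rw [map_mul, map_mul, map_pow]

end
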